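/- Let f(x) = x^T Q x where Q is a real symmetric n×n matrix, let r ≥ 2 be an integer, and let Q_max = max_{i ∈ [n]} Q_{ii}. Then f_{Δ(n,r)} − f_min^{(r−2)} ≤ (1/(r−1)) (Q_max − f_{Δ(n,r)}) ≤ (1/(r−1)) (f̄ − f̲). -/

import Mathlib

open Finset

noncomputable section

/-- Falling factorial `t^(d) = t (t-1) ⋯ (t-d+1)`. -/
def fall (t : ℝ) : ℕ → ℝ
  | 0 => 1
  | d + 1 => fall t d * (t - (d : ℝ))

/-- The regular grid `Δ(n,r) = {x ∈ Δ_n : r·x ∈ ℕ^n}`. -/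
def regularGrid (n r : ℕ) : Set (Fin n → ℝ) :=
  {x ∈ stdSimplex ℝ (Fin n) | ∀ i, ∃ k : ℕ, (r : ℝ) * x i = (k : ℝ)}

/-- `f_{Δ(n,r)}`, the minimum of `f` over the regular grid. -/
def minGrid (n r : ℕ) (f : (Fin n → ℝ) → ℝ) : ℝ :=
  sInf (f '' regularGrid n r)

/-- `f̲`, the minimum of `f` over the standard simplex. -/
def minSimplex (n : ℕ) (f : (Fin n → ℝ) → ℝ) : ℝ :=
  sInf (f '' stdSimplex ℝ (Fin n))

/-- `f̄`, the maximum of `f` over the standard simplex. -/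
def maxSimplex (n : ℕ) (f : (Fin n → ℝ) → ℝ) : ℝ :=
  sSup (f '' stdSimplex ℝ (Fin n))

/-- The quadratic form `f(x) = xᵀ Q x`. -/
def quadForm (n : ℕ) (Q : Matrix (Fin n) (Fin n) ℝ) (x : Fin n → ℝ) : ℝ :=
  ∑ i, ∑ j, Q i j * x i * x j

/-- The Pólya-type lower bound for the quadratic form `xᵀQx`:
`f_min^{(r-2)} = min_{α ∈ I(n,r)} [αᵀQα − Σ_i Q_ii α_i] / (r(r−1))`. -/
def quadPolya (n r : ℕ) (Q : Matrix (Fin n) (Fin n) ℝ) : ℝ :=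
  sInf ((fun α : Fin n → ℕ =>
      ((∑ i, ∑ j, Q i j * (α i : ℝ) * (α j : ℝ)) - ∑ i, Q i i * (α i : ℝ)) /
        ((r : ℝ) * ((r : ℝ) - 1))) ''
    {α : Fin n → ℕ | ∑ i, α i = r})


section Aux

variable (n r : ℕ) (Q : Matrix (Fin n) (Fin n) ℝ)

lemma gridSet_finite : ({α : Fin n → ℕ | ∑ i, α i = r}).Finite := by
  apply Set.Finite.subset (Set.Finite.pi fun _ : Fin n => Set.finite_Iic r)
  intro α hα
  simp only [Set.mem_pi, Set.mem_univ, Set.mem_Iic, forall_true_left]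
  intro i
  calc α i ≤ ∑ j, α j := Finset.single_le_sum (fun _ _ => Nat.zero_le _) (Finset.mem_univ i)
    _ = r := hα

lemma regularGrid_eq (hr : 0 < r) :
    regularGrid n r = (fun α : Fin n → ℕ => fun i => (α i : ℝ) / r) ''
      {α : Fin n → ℕ | ∑ i, α i = r} := by
  have hc0 : (r : ℝ) ≠ 0 := Nat.cast_ne_zero.mpr hr.ne'
  ext x
  constructor
  · rintro ⟨⟨hnn, hsum⟩, hgrid⟩
    choose k hk using hgrid
    refine ⟨k, ?_, ?_⟩
    · have : ((∑ i, k i : ℕ) : ℝ) = r := by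
        push_cast
        have : ∀ i, (k i : ℝ) = r * x i := fun i => (hk i).symm
        simp only [this, ← Finset.mul_sum, hsum, mul_one]
      exact_mod_cast this
    · funext i
      field_simp
      rw [← hk i]
  · rintro ⟨α, hα, rfl⟩
    refine ⟨⟨fun i => by positivity, ?_⟩, fun i => ⟨α i, by field_simp⟩⟩
    rw [← Finset.sum_div]
    rw [div_eq_one_iff_eq hc0]
    exact_mod_cast hα

lemma quadForm_div (α : Fin n → ℕ) (hc0 : (r : ℝ) ≠ 0) :
    quadForm n Q (fun i => (α i : ℝ) / r) =
      (∑ i, ∑ j, Q i j * (α i : ℝ) * (α j : ℝ)) / (r : ℝ) ^ 2 := by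
  unfold quadForm
  rw [Finset.sum_div]
  refine Finset.sum_congr rfl fun i _ => ?_
  rw [Finset.sum_div]
  refine Finset.sum_congr rfl fun j _ => ?_
  show Q i j * ((α i : ℝ) / r) * ((α j : ℝ) / r) = _
  rw [eq_div_iff (pow_ne_zero 2 hc0)]
  field_simp

lemma quadForm_single (i0 : Fin n) : quadForm n Q (Pi.single i0 1) = Q i0 i0 := by
  unfold quadForm
  simp [Pi.single_apply, mul_ite, ite_mul, Finset.sum_ite_eq']

lemma quadForm_continuous : Continuous (quadForm n Q) := by
  unfold quadForm
  apply continuous_finset_sum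
  intro i _
  apply continuous_finset_sum
  intro j _
  exact (continuous_const.mul (continuous_apply i)).mul (continuous_apply j)

end Aux

/-- for `f(x) = xᵀQx`, `Q` symmetric and `r ≥ 2`,
`f_{Δ(n,r)} − f_min^{(r−2)} ≤ (1/(r−1))(Q_max − f_{Δ(n,r)}) ≤ (1/(r−1))(f̄ − f̲)`. -/
theorem statement1 (n r : ℕ) (hn : 0 < n) (hr : 2 ≤ r)
    (Q : Matrix (Fin n) (Fin n) ℝ) (hQ : Q.IsSymm) :
    minGrid n r (quadForm n Q) - quadPolya n r Q ≤
        (1 / ((r : ℝ) - 1)) * (sSup (Set.range fun i => Q i i) - minGrid n r (quadForm n Q)) ∧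
      (1 / ((r : ℝ) - 1)) * (sSup (Set.range fun i => Q i i) - minGrid n r (quadForm n Q)) ≤
        (1 / ((r : ℝ) - 1)) * (maxSimplex n (quadForm n Q) - minSimplex n (quadForm n Q)) := by
  have hc1 : (1:ℝ) < (r:ℝ) := by exact_mod_cast lt_of_lt_of_le one_lt_two hr
  have hc : (0:ℝ) < (r:ℝ) - 1 := by linarith
  have hcpos : (0:ℝ) < (r:ℝ) := by linarith
  have hc0 : (r:ℝ) ≠ 0 := hcpos.ne'
  have hrpos : 0 < r := by omega
  set c : ℝ := (r : ℝ) with hcdef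
  set I : Set (Fin n → ℕ) := {α : Fin n → ℕ | ∑ i, α i = r} with hI
  have hIfin : I.Finite := gridSet_finite n r
  have i0 : Fin n := ⟨0, hn⟩
  have hIne : I.Nonempty := ⟨Pi.single i0 r, by simp [hI, Finset.sum_pi_single']⟩
  have hgrid : regularGrid n r = (fun α : Fin n → ℕ => fun i => (α i : ℝ) / r) '' I :=
    regularGrid_eq n r hrpos
  set f := quadForm n Q with hf
  set A := f '' regularGrid n r with hA
  set B := ((fun α : Fin n → ℕ =>
      ((∑ i, ∑ j, Q i j * (α i : ℝ) * (α j : ℝ)) - ∑ i, Q i i * (α i : ℝ)) /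
        ((r : ℝ) * ((r : ℝ) - 1))) '' I) with hB
  have hAfin : A.Finite := by rw [hA, hgrid, ← Set.image_comp]; exact hIfin.image _
  have hAne : A.Nonempty := by
    rw [hA, hgrid, ← Set.image_comp]; exact hIne.image _
  have hBfin : B.Finite := hIfin.image _
  have hBne : B.Nonempty := hIne.image _
  have hpB : quadPolya n r Q = sInf B := rfl
  have hmA : minGrid n r f = sInf A := rfl
  have hQrange : (Set.range fun i => Q i i).Finite := Set.finite_range _
  have hQrangene : (Set.range fun i => Q i i).Nonempty := ⟨Q i0 i0, ⟨i0, rfl⟩⟩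
  set Qmax := sSup (Set.range fun i => Q i i) with hQmax
  have hQle : ∀ i, Q i i ≤ Qmax := fun i => le_csSup hQrange.bddAbove ⟨i, rfl⟩
  obtain ⟨α, hαI, hαeq⟩ := hBne.csInf_mem hBfin
  have hαI' : ∑ i, α i = r := hαI
  set T := ∑ i, ∑ j, Q i j * (α i : ℝ) * (α j : ℝ) with hT
  set D := ∑ i, Q i i * (α i : ℝ) with hD
  have hsumα : (∑ i, (α i : ℝ)) = c := by
    rw [hcdef, ← hαI']
    push_cast
    rfl
  have hDle : D ≤ Qmax * c := by
    calc D ≤ ∑ i, Qmax * (α i : ℝ) := by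
          apply Finset.sum_le_sum
          intro i _
          exact mul_le_mul_of_nonneg_right (hQle i) (Nat.cast_nonneg _)
      _ = Qmax * c := by rw [← Finset.mul_sum, hsumα]
  have hmemA : f (fun i => (α i : ℝ) / r) ∈ A := by
    rw [hA, hgrid]; exact ⟨_, ⟨α, hαI, rfl⟩, rfl⟩
  have hmle : sInf A ≤ T / c ^ 2 := by
    have h := csInf_le hAfin.bddBelow hmemA
    rw [hf] at h
    rwa [quadForm_div n r Q α hc0] at h
  set m := sInf A with hm
  set p := sInf B with hp
  have hpval : p = (T - D) / (c * (c - 1)) := hαeq.symm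
  have key : m * c ≤ p * (c - 1) + Qmax := by
    have h1 : m * c ^ 2 ≤ T := by
      have := mul_le_mul_of_nonneg_right hmle (le_of_lt (by positivity : (0:ℝ) < c ^ 2))
      rwa [div_mul_cancel₀ _ (by positivity : (c:ℝ)^2 ≠ 0)] at this
    have h2 : p * (c * (c - 1)) = T - D := by
      rw [hpval, div_mul_cancel₀]
      positivity
    nlinarith [hcpos, hc]
  constructor
  · rw [hmA, hpB]
    rw [div_mul_eq_mul_div, one_mul, le_div_iff₀ hc]
    nlinarith [key]
  · have h1r : (0:ℝ) ≤ 1 / (c - 1) := by positivity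
    apply mul_le_mul_of_nonneg_left _ h1r
    have hfc : Continuous f := by rw [hf]; exact quadForm_continuous n Q
    have hcomp : IsCompact (f '' stdSimplex ℝ (Fin n)) :=
      (isCompact_stdSimplex ℝ (Fin n)).image hfc
    have hmaxdef : maxSimplex n f = sSup (f '' stdSimplex ℝ (Fin n)) := rfl
    have hmindef : minSimplex n f = sInf (f '' stdSimplex ℝ (Fin n)) := rfl
    have hQmaxle : Qmax ≤ maxSimplex n f := by
      rw [hQmax]
      apply csSup_le hQrangene
      rintro q ⟨i, rfl⟩
      have hmem : f (Pi.single i 1) ∈ f '' stdSimplex ℝ (Fin n) :=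
        ⟨Pi.single i 1, single_mem_stdSimplex ℝ i, rfl⟩
      have hle := le_csSup hcomp.bddAbove hmem
      have heq : f (Pi.single i 1) = Q i i := by
        rw [hf]; exact quadForm_single n Q i
      rw [hmaxdef]
      calc (fun i => Q i i) i = f (Pi.single i 1) := heq.symm
        _ ≤ _ := hle
    have hminle : minSimplex n f ≤ m := by
      rw [hmindef, hm]
      apply csInf_le_csInf hcomp.bddBelow hAne
      rw [hA]
      exact Set.image_mono (fun x hx => hx.1)
    rw [hmA]
    linarith
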